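/- Let d ≥ 2 be even and set n = d/2. Let s be the constant sign sequence with s_i = +1 for all 0 ≤ i ≤ d. Then z_i(s) = 0 for 0 ≤ i ≤ n−1 and z_n(s) = 1; that is, the improper involutor (0,…,0,1) corresponds to the all-plus sign sequence. -/

import Mathlib

open MvPolynomial Finset
set_option maxHeartbeats 2000000

/-- A sign sequence for `d`: values `±1` with `s_{d−i} = (−1)^d s_i`. -/
def SignSeq (d : ℕ) (s : ℕ → ℂ) : Prop :=
  ∀ i ≤ d, (s i = 1 ∨ s i = -1) ∧ s (d - i) = (-1 : ℂ) ^ d * s i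

/-- `m_ℓ` is `1/2` if `d = 2ℓ` and `1` otherwise. -/
noncomputable def mcoef (d l : ℕ) : ℂ := if d = 2 * l then 1 / 2 else 1

noncomputable def E1 (d i : ℕ) : ℂ :=
  ((d.factorial : ℂ) * ((2 * d - 4 * i + 1).factorial : ℂ)) /
    ((2 : ℂ) ^ (2 * (i : ℤ) - 1) * ((d - 2 * i).factorial : ℂ) ^ 2)

noncomputable def E2 (d : ℕ) (s : ℕ → ℂ) (i : ℕ) : ℂ :=
  ∑ e ∈ range (i + 1), ∑ l ∈ range (d / 2 + 1), ∑ p ∈ range (l + 1),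
    ∑ q ∈ range (d - l + 1),
      if p + q = d - 2 * e then
        s l * mcoef d l * (-1 : ℂ) ^ q *
            (((d - 2 * e).factorial : ℂ) * ((d - i - e).factorial : ℂ)) /
          (((2 * d - 2 * i - 2 * e + 1).factorial : ℂ) * ((i - e).factorial : ℂ) *
            (p.factorial : ℂ) * (q.factorial : ℂ) * ((l - p).factorial : ℂ) *
            ((d - l - q).factorial : ℂ))
      else 0

/-- `z_i(s) = E_{1,i} · E_{2,i}`. -/
noncomputable def zfun (d : ℕ) (s : ℕ → ℂ) (i : ℕ) : ℂ := E1 d i * E2 d s i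

section Aux
open Polynomial


lemma coeff_one_sub_X_pow (m q : ℕ) :
    ((1 - Polynomial.X : ℂ[X]) ^ m).coeff q = (-1:ℂ)^q * (m.choose q) := by
  have h : (1 - Polynomial.X : ℂ[X]) ^ m
      = ∑ j ∈ range (m+1), Polynomial.C ((-1:ℂ)^j * (m.choose j : ℂ)) * Polynomial.X^j := by
    rw [show (1 - Polynomial.X : ℂ[X]) = -Polynomial.X + 1 by ring, add_pow]
    refine Finset.sum_congr rfl fun j _ => ?_
    simp only [map_mul, map_pow, map_neg, map_one, Polynomial.C_eq_natCast]
    ring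
  rw [h, Polynomial.finset_sum_coeff]
  simp only [Polynomial.coeff_C_mul, Polynomial.coeff_X_pow, mul_ite, mul_one, mul_zero]
  rw [Finset.sum_ite_eq]
  by_cases hq : q ∈ range (m+1)
  · simp [hq]
  · have : m < q := by simpa [Nat.lt_succ_iff, not_lt] using (by simpa using hq : ¬ q < m + 1)
    simp [hq, Nat.choose_eq_zero_of_lt this]

noncomputable def gsum (d l k : ℕ) : ℂ :=
  ∑ p ∈ range (k+1), (l.choose p : ℂ) * (-1:ℂ)^(k-p) * (((d-l).choose (k-p) : ℂ))

lemma g_eq_coeff (d l k : ℕ) :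
    gsum d l k = (((1+Polynomial.X)^l * (1-Polynomial.X)^(d-l) : ℂ[X])).coeff k := by
  rw [Polynomial.coeff_mul, Finset.Nat.sum_antidiagonal_eq_sum_range_succ_mk]
  refine (Finset.sum_congr rfl fun p _ => ?_).symm
  rw [Polynomial.coeff_one_add_X_pow, coeff_one_sub_X_pow]
  ring

lemma sum_g (d k : ℕ) :
    ∑ l ∈ range (d+1), (d.choose l : ℂ) * gsum d l k = if k = 0 then 2^d else 0 := by
  have h2 : ((1+Polynomial.X) + (1-Polynomial.X) : ℂ[X]) = Polynomial.C 2 := by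
    rw [map_ofNat]; ring
  have h : ∑ l ∈ range (d+1), ((1+Polynomial.X:ℂ[X])^l * (1-Polynomial.X)^(d-l) * ((d.choose l : ℕ) : ℂ[X]))
      = (Polynomial.C (2:ℂ))^d := by
    rw [← h2, ← add_pow]
  calc ∑ l ∈ range (d+1), (d.choose l : ℂ) * gsum d l k
      = ∑ l ∈ range (d+1), ((1+Polynomial.X:ℂ[X])^l * (1-Polynomial.X)^(d-l) * ((d.choose l : ℕ) : ℂ[X])).coeff k := by
        refine Finset.sum_congr rfl fun l _ => ?_
        rw [g_eq_coeff, ← Polynomial.C_eq_natCast, Polynomial.coeff_mul_C]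
        ring
    _ = ((Polynomial.C (2:ℂ))^d).coeff k := by rw [← Polynomial.finset_sum_coeff, h]
    _ = if k = 0 then 2^d else 0 := by
        rw [← Polynomial.C_pow, Polynomial.coeff_C]

lemma neg_one_pow_sub' (k j : ℕ) (h : j ≤ k) (hk : Even k) :
    (-1:ℂ)^(k-j) = (-1:ℂ)^j := by
  have h1 : (-1:ℂ)^(k-j) * (-1:ℂ)^j = (-1:ℂ)^k := by
    rw [← pow_add]; congr 1; omega
  have hk1 : (-1:ℂ)^k = 1 := hk.neg_one_pow
  have hj : (-1:ℂ)^j * (-1:ℂ)^j = 1 := by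
    rw [← pow_add]; exact Even.neg_one_pow ⟨j, rfl⟩
  calc (-1:ℂ)^(k-j) = (-1:ℂ)^(k-j) * ((-1:ℂ)^j * (-1:ℂ)^j) := by rw [hj, mul_one]
    _ = ((-1:ℂ)^(k-j) * (-1:ℂ)^j) * (-1:ℂ)^j := by ring
    _ = (-1:ℂ)^j := by rw [h1, hk1, one_mul]

lemma g_symm (d l k : ℕ) (hl : l ≤ d) (hk : Even k) :
    gsum d (d-l) k = gsum d l k := by
  unfold gsum
  rw [Nat.sub_sub_self hl]
  rw [← Finset.sum_range_reflect]
  refine Finset.sum_congr rfl fun p hp => ?_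
  have hp' : p ≤ k := by simpa [Nat.lt_succ_iff] using hp
  have h1 : k + 1 - 1 - p = k - p := by omega
  have h2 : k - (k - p) = p := by omega
  rw [h1, h2, neg_one_pow_sub' k p hp' hk]
  ring

lemma pq_sum (d l k : ℕ) (hl : l ≤ d) :
    ∑ p ∈ range (l+1), ∑ q ∈ range (d-l+1),
      (if p+q = k then (l.choose p : ℂ) * (-1:ℂ)^q * (((d-l).choose q : ℕ) : ℂ) else 0)
    = gsum d l k := by
  set M := d + k + 1 with hM
  have hin : ∀ p, ∑ q ∈ range (d-l+1),
      (if p+q = k then (l.choose p : ℂ) * (-1:ℂ)^q * (((d-l).choose q : ℕ) : ℂ) else 0)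
      = ∑ q ∈ range M, (if p+q = k then (l.choose p : ℂ) * (-1:ℂ)^q * (((d-l).choose q : ℕ) : ℂ) else 0) := by
    intro p
    refine Finset.sum_subset (Finset.range_subset_range.2 (by omega)) ?_
    intro q _ hq
    have hql : d - l < q := by
      by_contra h
      exact hq (Finset.mem_range.2 (by omega))
    simp [Nat.choose_eq_zero_of_lt hql]
  simp only [hin]
  have hout : ∑ p ∈ range (l+1), ∑ q ∈ range M,
      (if p+q = k then (l.choose p : ℂ) * (-1:ℂ)^q * (((d-l).choose q : ℕ) : ℂ) else 0)
      = ∑ p ∈ range M, ∑ q ∈ range M,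
      (if p+q = k then (l.choose p : ℂ) * (-1:ℂ)^q * (((d-l).choose q : ℕ) : ℂ) else 0) := by
    refine Finset.sum_subset (Finset.range_subset_range.2 (by omega)) ?_
    intro p _ hp
    have hpl : l < p := by
      by_contra h
      exact hp (Finset.mem_range.2 (by omega))
    simp [Nat.choose_eq_zero_of_lt hpl]
  rw [hout, ← Finset.sum_product']
  rw [← Finset.sum_filter]
  have hset : Finset.filter (fun x : ℕ × ℕ => x.1 + x.2 = k) (range M ×ˢ range M)
      = Finset.HasAntidiagonal.antidiagonal k := by
    ext ⟨p, q⟩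
    simp only [Finset.mem_filter, Finset.mem_product, Finset.mem_range, Finset.HasAntidiagonal.mem_antidiagonal]
    constructor
    · rintro ⟨_, h⟩; exact h
    · intro h; exact ⟨⟨by omega, by omega⟩, h⟩
  rw [hset, Finset.Nat.sum_antidiagonal_eq_sum_range_succ_mk]
  rfl

lemma Tsum (n k : ℕ) (hk : Even k) :
    ∑ l ∈ range (n+1), mcoef (2*n) l * (((2*n).choose l : ℕ) : ℂ) * gsum (2*n) l k
    = (if k = 0 then 2^(2*n) else 0) / 2 := by
  set d := 2*n with hd
  set f : ℕ → ℂ := fun l => ((d.choose l : ℕ) : ℂ) * gsum d l k with hf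
  have hsymm : ∀ l ≤ d, f (d - l) = f l := by
    intro l hl
    simp only [hf]
    rw [Nat.choose_symm hl, g_symm d l k hl hk]
  have hsplit : ∑ l ∈ range (d+1), f l = ∑ l ∈ range (n+1), f l + ∑ l ∈ range n, f l := by
    have h1 : d + 1 = (n+1) + n := by omega
    rw [h1, Finset.sum_range_add]
    congr 1
    calc ∑ j ∈ range n, f ((n+1) + j) = ∑ j ∈ range n, f (n - 1 - j) := by
          refine Finset.sum_congr rfl fun j hj => ?_
          have hj' : j < n := Finset.mem_range.mp hj
          have h2 : n - 1 - j = d - ((n+1)+j) := by omega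
          rw [h2, hsymm _ (by omega)]
      _ = ∑ j ∈ range n, f j := Finset.sum_range_reflect f n
  have hS : ∑ l ∈ range (d+1), f l = if k = 0 then 2^d else 0 := sum_g d k
  have hmc : ∑ l ∈ range (n+1), mcoef d l * f l = ∑ l ∈ range n, f l + f n / 2 := by
    rw [Finset.sum_range_succ]
    have h3 : mcoef d n = 1/2 := by simp [mcoef, hd]
    rw [h3]
    congr 1
    · refine Finset.sum_congr rfl fun l hl => ?_
      have hl' : l < n := Finset.mem_range.mp hl
      have : mcoef d l = 1 := by
        simp only [mcoef, hd]
        rw [if_neg (by omega)]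
      rw [this, one_mul]
    · ring
  have hgoal : ∑ l ∈ range (n+1), mcoef d l * (((d.choose l : ℕ)) : ℂ) * gsum d l k
      = ∑ l ∈ range (n+1), mcoef d l * f l := by
    refine Finset.sum_congr rfl fun l _ => ?_
    simp only [hf]; ring
  rw [hgoal, hmc]
  have h4 : ∑ l ∈ range (n+1), f l = ∑ l ∈ range n, f l + f n := Finset.sum_range_succ f n
  have h5 := hsplit
  rw [h4, hS] at h5
  simp only [hf] at h5 ⊢
  field_simp
  linear_combination (-1 : ℂ) * h5

end Aux

lemma scalar_eq (M s N D1 D2 P Q L1 L2 T L Lc : ℂ) (hD1 : D1 ≠ 0) (hD2 : D2 ≠ 0)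
    (hP : P ≠ 0) (hQ : Q ≠ 0) (hL1 : L1 ≠ 0) (hL2 : L2 ≠ 0) (hT : T ≠ 0) (hL : L ≠ 0)
    (hLc : Lc ≠ 0) :
    M * s * N / (D1 * D2 * P * Q * L1 * L2)
      = N / (D1 * D2 * T) * (M * (T / (L * Lc)) * (L / (P * L1) * s * (Lc / (Q * L2)))) := by
  field_simp

/-- for even `d`, the improper involutor `(0,…,0,1)` corresponds to the
all-plus sign sequence: `z_i(+,…,+) = 0` for `i < n` and `z_n(+,…,+) = 1`, `n = d/2`. -/
theorem stmt6 (d : ℕ) (hd : 2 ≤ d) (hdev : Even d) :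
    (∀ i < d / 2, zfun d (fun _ => (1 : ℂ)) i = 0) ∧
    zfun d (fun _ => (1 : ℂ)) (d / 2) = 1 := by
  obtain ⟨m, hm⟩ := hdev
  obtain ⟨n, rfl⟩ : ∃ n, d = 2 * n := ⟨m, by omega⟩
  have hn2 : 2 * n / 2 = n := by omega
  have hn1 : 1 ≤ n := by omega
  have key : ∀ i ≤ n, E2 (2*n) (fun _ => 1) i =
      ∑ e ∈ range (i+1),
        ((((2*n-2*e).factorial : ℂ) * (((2*n)-i-e).factorial : ℂ)) /
          (((2*(2*n)-2*i-2*e+1).factorial : ℂ) * ((i-e).factorial : ℂ) * ((2*n).factorial : ℂ)))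
        * ((if 2*n - 2*e = 0 then (2:ℂ)^(2*n) else 0) / 2) := by
    intro i hi
    unfold E2
    rw [hn2]
    refine Finset.sum_congr rfl fun e he => ?_
    have hev : Even (2*n - 2*e) := ⟨n - e, by omega⟩
    calc ∑ l ∈ range (n+1), ∑ p ∈ range (l+1), ∑ q ∈ range (2*n-l+1),
          (if p + q = 2*n - 2*e then
            (fun _ => (1:ℂ)) l * mcoef (2*n) l * (-1 : ℂ) ^ q *
                (((2*n - 2*e).factorial : ℂ) * ((2*n - i - e).factorial : ℂ)) /
              (((2*(2*n) - 2*i - 2*e + 1).factorial : ℂ) * ((i - e).factorial : ℂ) *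
                (p.factorial : ℂ) * (q.factorial : ℂ) * ((l - p).factorial : ℂ) *
                ((2*n - l - q).factorial : ℂ))
          else 0)
        = ∑ l ∈ range (n+1),
            ((((2*n-2*e).factorial : ℂ) * (((2*n)-i-e).factorial : ℂ)) /
              (((2*(2*n)-2*i-2*e+1).factorial : ℂ) * ((i-e).factorial : ℂ) * ((2*n).factorial : ℂ)))
            * (mcoef (2*n) l * (((2*n).choose l : ℕ) : ℂ) * gsum (2*n) l (2*n-2*e)) := by
          refine Finset.sum_congr rfl fun l hl => ?_
          have hl' : l ≤ 2*n := by
            have := Finset.mem_range.mp hl; omega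
          calc ∑ p ∈ range (l+1), ∑ q ∈ range (2*n-l+1),
              (if p + q = 2*n - 2*e then
                (fun _ => (1:ℂ)) l * mcoef (2*n) l * (-1 : ℂ) ^ q *
                    (((2*n - 2*e).factorial : ℂ) * ((2*n - i - e).factorial : ℂ)) /
                  (((2*(2*n) - 2*i - 2*e + 1).factorial : ℂ) * ((i - e).factorial : ℂ) *
                    (p.factorial : ℂ) * (q.factorial : ℂ) * ((l - p).factorial : ℂ) *
                    ((2*n - l - q).factorial : ℂ))
              else 0)
              = ∑ p ∈ range (l+1), ∑ q ∈ range (2*n-l+1),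
                ((((2*n-2*e).factorial : ℂ) * (((2*n)-i-e).factorial : ℂ)) /
                  (((2*(2*n)-2*i-2*e+1).factorial : ℂ) * ((i-e).factorial : ℂ) * ((2*n).factorial : ℂ)))
                * (mcoef (2*n) l * (((2*n).choose l : ℕ) : ℂ) *
                    (if p + q = 2*n - 2*e then
                      ((l.choose p : ℕ) : ℂ) * (-1:ℂ)^q * (((2*n-l).choose q : ℕ) : ℂ)
                    else 0)) := by
                refine Finset.sum_congr rfl fun p hp => Finset.sum_congr rfl fun q hq => ?_
                have hp' : p ≤ l := by have := Finset.mem_range.mp hp; omega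
                have hq' : q ≤ 2*n - l := by have := Finset.mem_range.mp hq; omega
                split_ifs with hcond
                · simp only [one_mul]
                  rw [Nat.cast_choose ℂ hl', Nat.cast_choose ℂ hp', Nat.cast_choose ℂ hq']
                  have f1 : ((p.factorial : ℂ)) ≠ 0 := Nat.cast_ne_zero.2 p.factorial_ne_zero
                  have f2 : ((q.factorial : ℂ)) ≠ 0 := Nat.cast_ne_zero.2 q.factorial_ne_zero
                  have f3 : (((l-p).factorial : ℂ)) ≠ 0 := Nat.cast_ne_zero.2 (l-p).factorial_ne_zero
                  have f4 : (((2*n-l-q).factorial : ℂ)) ≠ 0 := Nat.cast_ne_zero.2 (2*n-l-q).factorial_ne_zero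
                  have f5 : (((2*(2*n)-2*i-2*e+1).factorial : ℂ)) ≠ 0 := Nat.cast_ne_zero.2 (2*(2*n)-2*i-2*e+1).factorial_ne_zero
                  have f6 : (((i-e).factorial : ℂ)) ≠ 0 := Nat.cast_ne_zero.2 (i-e).factorial_ne_zero
                  have f7 : (((2*n).factorial : ℂ)) ≠ 0 := Nat.cast_ne_zero.2 (2*n).factorial_ne_zero
                  have f8 : ((l.factorial : ℂ)) ≠ 0 := Nat.cast_ne_zero.2 l.factorial_ne_zero
                  have f9 : (((2*n-l).factorial : ℂ)) ≠ 0 := Nat.cast_ne_zero.2 (2*n-l).factorial_ne_zero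
                  exact scalar_eq _ _ _ _ _ _ _ _ _ _ _ _ f5 f6 f1 f2 f3 f4 f7 f8 f9
                · simp
            _ = ((((2*n-2*e).factorial : ℂ) * (((2*n)-i-e).factorial : ℂ)) /
                  (((2*(2*n)-2*i-2*e+1).factorial : ℂ) * ((i-e).factorial : ℂ) * ((2*n).factorial : ℂ)))
                * (mcoef (2*n) l * (((2*n).choose l : ℕ) : ℂ) * gsum (2*n) l (2*n-2*e)) := by
                simp only [← Finset.mul_sum]
                rw [pq_sum (2*n) l (2*n-2*e) hl']
      _ = ((((2*n-2*e).factorial : ℂ) * (((2*n)-i-e).factorial : ℂ)) /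
            (((2*(2*n)-2*i-2*e+1).factorial : ℂ) * ((i-e).factorial : ℂ) * ((2*n).factorial : ℂ)))
          * ((if 2*n - 2*e = 0 then (2:ℂ)^(2*n) else 0) / 2) := by
          rw [← Finset.mul_sum, Tsum n (2*n-2*e) hev]
  constructor
  · intro i hi
    rw [hn2] at hi
    have h0 : E2 (2*n) (fun _ => 1) i = 0 := by
      rw [key i (le_of_lt hi)]
      refine Finset.sum_eq_zero fun e he => ?_
      have he' : e < i + 1 := Finset.mem_range.mp he
      rw [if_neg (by omega : ¬ 2*n - 2*e = 0)]
      simp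
    unfold zfun
    rw [h0, mul_zero]
  · rw [hn2]
    unfold zfun
    rw [key n le_rfl]
    rw [Finset.sum_eq_single_of_mem n (Finset.self_mem_range_succ n)]
    · have e1 : 2*n - 2*n = 0 := by omega
      have e2 : 2*n - n - n = 0 := by omega
      have e3 : 2*(2*n) - 2*n - 2*n + 1 = 1 := by omega
      have e4 : n - n = 0 := by omega
      have e5 : 2*(2*n) - 4*n + 1 = 1 := by omega
      have e6 : 2*n - 2*n = 0 := e1
      unfold E1
      rw [e1, e2, e3, e4, e5]
      rw [if_pos rfl]
      have hz : (2:ℂ)^(2*(n:ℤ)-1) = (2:ℂ)^(2*n-1 : ℕ) := by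
        rw [← zpow_natCast]
        congr 1
        push_cast
        omega
      rw [hz]
      have f7 : (((2*n).factorial : ℂ)) ≠ 0 := Nat.cast_ne_zero.2 (2*n).factorial_ne_zero
      have h2 : (2:ℂ)^(2*n-1 : ℕ) ≠ 0 := pow_ne_zero _ two_ne_zero
      have hpow : (2:ℂ)^(2*n) = (2:ℂ)^(2*n-1 : ℕ) * 2 := by
        rw [← pow_succ]
        congr 1
        omega
      simp only [Nat.factorial_zero, Nat.factorial_one, Nat.cast_one]
      field_simp
      rw [hpow]
    · intro e he hne
      have he' : e < n + 1 := Finset.mem_range.mp he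
      rw [if_neg (by omega : ¬ 2*n - 2*e = 0)]
      simp
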